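/- arXiv:2402.08547 — 3 statements merged into one kernel-verified Lean document; each statement's English description precedes it below -/
import Mathlib

section
/- Let f : [0,1] → [0,1] be continuous and increasing with f(0) = 0 and f(1) = 1. Suppose n ≥ 1 is an integer and ε > 0 is such that |f(x) − f(y)| ≤ ε for all x, y ∈ [0,1] with |x − y| ≤ 1/n. Then there exists V ∈ W_n such that |f(x) − V(x)| ≤ ε + 2/n for all x ∈ [0,1]. -/
noncomputable def gAux (f : ℝ → ℝ) (n : ℕ) (i : ℕ) : ℝ :=
  (⌊(n : ℝ) * f ((min i n : ℕ) / n)⌋ : ℝ) / n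

noncomputable def VAux (f : ℝ → ℝ) (n : ℕ) (x : ℝ) : ℝ :=
  gAux f n ⌊(n : ℝ) * x⌋₊ +
    ((n : ℝ) * x - (⌊(n : ℝ) * x⌋₊ : ℝ)) *
      (gAux f n (⌊(n : ℝ) * x⌋₊ + 1) - gAux f n ⌊(n : ℝ) * x⌋₊)



/-- `Wn n` is the set of cumulative valuation functions `V : [0,1] → [0,1]` (encoded as
functions `ℝ → ℝ` with the relevant conditions on `[0,1]`) that are nondecreasing, satisfy
`V(0) = 0`, `V(1) = 1`, take values in `{0, 1/n, …, 1}` at the grid points `i/n`, and are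
affine on each grid interval `[i/n, (i+1)/n]`. -/
def Wn (n : ℕ) : Set (ℝ → ℝ) :=
  { V | (∀ x ∈ Set.Icc (0:ℝ) 1, V x ∈ Set.Icc (0:ℝ) 1) ∧
        MonotoneOn V (Set.Icc (0:ℝ) 1) ∧
        V 0 = 0 ∧ V 1 = 1 ∧
        (∀ i : ℕ, i ≤ n → ∃ k : ℕ, V ((i : ℝ) / n) = (k : ℝ) / n) ∧
        (∀ i : ℕ, i < n → ∀ x : ℝ, (i : ℝ) / n ≤ x → x ≤ ((i : ℝ) + 1) / n →
          V x = V ((i : ℝ) / n) +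
            (n : ℝ) * (x - (i : ℝ) / n) * (V (((i : ℝ) + 1) / n) - V ((i : ℝ) / n))) }

set_option maxHeartbeats 1000000 in
/-- A continuous increasing `f : [0,1] → [0,1]` with `f(0)=0`, `f(1)=1`
whose modulus of continuity at scale `1/n` is `ε` is approximated within `ε + 2/n` by some
element of `W_n`. -/
theorem wn_approximates_given_modulus
    (f : ℝ → ℝ)
    (hcont : ContinuousOn f (Set.Icc (0:ℝ) 1))
    (hmono : MonotoneOn f (Set.Icc (0:ℝ) 1))
    (hrange : ∀ x ∈ Set.Icc (0:ℝ) 1, f x ∈ Set.Icc (0:ℝ) 1)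
    (hf0 : f 0 = 0) (hf1 : f 1 = 1)
    (n : ℕ) (hn : 1 ≤ n) (ε : ℝ) (hε : 0 < ε)
    (hmod : ∀ x ∈ Set.Icc (0:ℝ) 1, ∀ y ∈ Set.Icc (0:ℝ) 1,
      |x - y| ≤ 1 / n → |f x - f y| ≤ ε) :
    ∃ V ∈ Wn n, ∀ x ∈ Set.Icc (0:ℝ) 1, |f x - V x| ≤ ε + 2 / n := by
  have hn0 : (0:ℝ) < n := by exact_mod_cast hn
  have hnne : (n:ℝ) ≠ 0 := ne_of_gt hn0
  set g : ℕ → ℝ := gAux f n with hg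
  set V : ℝ → ℝ := VAux f n with hV
  -- grid point membership
  have hgridmem : ∀ i : ℕ, i ≤ n → ((i:ℝ)/n) ∈ Set.Icc (0:ℝ) 1 := by
    intro i hi
    constructor
    · positivity
    · rw [div_le_one hn0]; exact_mod_cast hi
  -- g i ≤ f (min i n / n)
  have hg_le : ∀ i : ℕ, g i ≤ f ((min i n : ℕ) / n) := by
    intro i
    rw [hg]; unfold gAux
    rw [div_le_iff₀ hn0]
    calc (⌊(n : ℝ) * f ((min i n : ℕ) / n)⌋ : ℝ) ≤ (n:ℝ) * f ((min i n : ℕ) / n) :=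
      Int.floor_le _
    _ = f ((min i n : ℕ) / n) * n := by ring
  have hg_gt : ∀ i : ℕ, f ((min i n : ℕ) / n) - 1/n < g i := by
    intro i
    rw [hg]; unfold gAux
    rw [sub_lt_iff_lt_add, ← add_div, lt_div_iff₀ hn0]
    have := Int.lt_floor_add_one ((n : ℝ) * f ((min i n : ℕ) / n))
    nlinarith
  have hg_mono : ∀ i j : ℕ, i ≤ j → g i ≤ g j := by
    intro i j hij
    rw [hg]; unfold gAux
    have h1 : f ((min i n : ℕ) / n) ≤ f ((min j n : ℕ) / n) := by
      apply hmono (hgridmem _ (min_le_right _ _)) (hgridmem _ (min_le_right _ _))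
      have hmm : ((min i n : ℕ):ℝ) ≤ ((min j n : ℕ):ℝ) :=
        Nat.cast_le.2 (min_le_min_right n hij)
      rw [div_le_div_iff₀ hn0 hn0]; nlinarith
    have h2 : ((⌊(n:ℝ) * f ((min i n : ℕ)/n)⌋ : ℤ) : ℝ) ≤ ((⌊(n:ℝ) * f ((min j n : ℕ)/n)⌋ : ℤ) : ℝ) :=
      Int.cast_le.2 (Int.floor_mono (mul_le_mul_of_nonneg_left h1 (le_of_lt hn0)))
    rw [div_le_div_iff₀ hn0 hn0]; nlinarith
  have hg_nonneg : ∀ i : ℕ, 0 ≤ g i := by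
    intro i
    rw [hg]; unfold gAux
    apply div_nonneg _ (le_of_lt hn0)
    have hf := (hrange _ (hgridmem _ (min_le_right i n))).1
    have h0 : (0:ℤ) ≤ ⌊(n : ℝ) * f ((min i n : ℕ) / n)⌋ :=
      Int.floor_nonneg.2 (by nlinarith)
    exact Int.cast_nonneg h0
  have hg_top : ∀ i : ℕ, n ≤ i → g i = 1 := by
    intro i hi
    rw [hg]; unfold gAux
    rw [min_eq_right hi]
    rw [div_self hnne, hf1, mul_one]
    rw [show ((n:ℝ)) = ((n:ℤ):ℝ) by push_cast; ring, Int.floor_intCast]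
    push_cast; field_simp
  have hg_le1 : ∀ i : ℕ, g i ≤ 1 := by
    intro i
    calc g i ≤ f ((min i n : ℕ)/n) := hg_le i
    _ ≤ 1 := (hrange _ (hgridmem _ (min_le_right i n))).2
  -- V at grid points
  have hVgrid : ∀ i : ℕ, V ((i:ℝ)/n) = g i := by
    intro i
    rw [hV]; unfold VAux
    have h1 : (n:ℝ) * ((i:ℝ)/n) = (i:ℕ) := by field_simp
    rw [h1, Nat.floor_natCast]
    ring
  -- V x between g i and g (i+1) where i = floor
  have hfloor_facts : ∀ x : ℝ, 0 ≤ x →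
      (⌊(n:ℝ)*x⌋₊ : ℝ) ≤ (n:ℝ)*x ∧ (n:ℝ)*x < (⌊(n:ℝ)*x⌋₊ : ℝ) + 1 := by
    intro x hx
    exact ⟨Nat.floor_le (by positivity), Nat.lt_floor_add_one _⟩
  have hVbetween : ∀ x : ℝ, 0 ≤ x →
      g ⌊(n:ℝ)*x⌋₊ ≤ V x ∧ V x ≤ g (⌊(n:ℝ)*x⌋₊ + 1) := by
    intro x hx
    obtain ⟨h1, h2⟩ := hfloor_facts x hx
    have h3 := hg_mono ⌊(n:ℝ)*x⌋₊ (⌊(n:ℝ)*x⌋₊ + 1) (by omega)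
    rw [hV]; unfold VAux
    constructor <;> nlinarith
  have hV0 : V 0 = 0 := by
    have h := hVgrid 0
    norm_num at h
    rw [h, hg]; unfold gAux
    simp [hf0]
  have hV1 : V 1 = 1 := by
    have h := hVgrid n
    rw [div_self hnne] at h
    rw [h]; exact hg_top n le_rfl
  refine ⟨V, ⟨?_, ?_, hV0, hV1, ?_, ?_⟩, ?_⟩
  · -- range
    intro x hx
    obtain ⟨hl, hr⟩ := hVbetween x hx.1
    exact ⟨le_trans (hg_nonneg _) hl, le_trans hr (hg_le1 _)⟩
  · -- monotone
    intro x hx y hy hxy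
    obtain ⟨hxl, hxr⟩ := hVbetween x hx.1
    obtain ⟨hyl, hyr⟩ := hVbetween y hy.1
    have hij : ⌊(n:ℝ)*x⌋₊ ≤ ⌊(n:ℝ)*y⌋₊ :=
      Nat.floor_mono (by nlinarith [hx.1, hy.1] : (n:ℝ)*x ≤ (n:ℝ)*y)
    rcases eq_or_lt_of_le hij with heq | hlt
    · have h3 := hg_mono ⌊(n:ℝ)*x⌋₊ (⌊(n:ℝ)*x⌋₊ + 1) (by omega)
      have hkey : V y - V x = ((n:ℝ)*y - (n:ℝ)*x) * (g (⌊(n:ℝ)*x⌋₊ + 1) - g ⌊(n:ℝ)*x⌋₊) := by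
        rw [hV]; unfold VAux
        rw [← heq, ← hg]
        ring
      have hxy' : (n:ℝ)*x ≤ (n:ℝ)*y := by nlinarith
      nlinarith [mul_nonneg (by linarith : (0:ℝ) ≤ (n:ℝ)*y - (n:ℝ)*x)
        (by linarith : (0:ℝ) ≤ g (⌊(n:ℝ)*x⌋₊ + 1) - g ⌊(n:ℝ)*x⌋₊)]
    · calc V x ≤ g (⌊(n:ℝ)*x⌋₊ + 1) := hxr
      _ ≤ g ⌊(n:ℝ)*y⌋₊ := hg_mono _ _ (by omega)
      _ ≤ V y := hyl
  · -- grid values are k/n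
    intro i hi
    refine ⟨(⌊(n : ℝ) * f ((min i n : ℕ) / n)⌋).toNat, ?_⟩
    rw [hVgrid i, hg]; unfold gAux
    congr 1
    have hf := (hrange _ (hgridmem _ (min_le_right i n))).1
    have hnn : (0:ℤ) ≤ ⌊(n : ℝ) * f ((min i n : ℕ) / n)⌋ :=
      Int.floor_nonneg.2 (by nlinarith)
    have h2 : ((⌊(n : ℝ) * f ((min i n : ℕ) / n)⌋ : ℤ) : ℝ)
        = (((⌊(n : ℝ) * f ((min i n : ℕ) / n)⌋.toNat : ℕ) : ℤ) : ℝ) := by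
      rw [Int.toNat_of_nonneg hnn]
    rw [h2, Int.cast_natCast]
  · -- affine
    intro i hi x hx1 hx2
    have hgi : V ((i:ℝ)/n) = g i := hVgrid i
    have hgi1 : V (((i:ℝ)+1)/n) = g (i+1) := by
      have := hVgrid (i+1)
      push_cast at this
      exact this
    rw [hgi, hgi1]
    rcases eq_or_lt_of_le hx2 with heq | hlt
    · rw [heq, hgi1]
      have hsub : (n:ℝ) * (((i:ℝ)+1)/n - (i:ℝ)/n) = 1 := by field_simp; ring
      rw [hsub]
      push_cast
      ring
    · have hfl : ⌊(n:ℝ)*x⌋₊ = i := by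
        have hx0 : (0:ℝ) ≤ (n:ℝ)*x :=
          mul_nonneg hn0.le (le_trans (by positivity : (0:ℝ) ≤ (i:ℝ)/n) hx1)
        apply (Nat.floor_eq_iff hx0).2
        constructor
        · calc ((i:ℕ):ℝ) = (n:ℝ) * ((i:ℝ)/n) := by field_simp
          _ ≤ (n:ℝ)*x := by nlinarith
        · calc (n:ℝ)*x < (n:ℝ) * (((i:ℝ)+1)/n) := by nlinarith
          _ = (i:ℝ) + 1 := by field_simp
      rw [hV]; unfold VAux
      rw [hfl]
      have h5 : (n:ℝ) * (x - (i:ℝ)/n) = (n:ℝ)*x - (i:ℝ) := by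
        field_simp
      rw [h5, ← hg]
  · -- approximation
    intro x hx
    have hxn : (n:ℝ)*x ≤ n := by
      have := mul_le_of_le_one_right hn0.le hx.2
      simpa using this
    have hin : ⌊(n:ℝ)*x⌋₊ ≤ n := by
      have h := Nat.floor_mono (R := ℝ) (by exact_mod_cast hxn : (n:ℝ)*x ≤ ((n:ℕ):ℝ))
      simpa using h
    obtain ⟨hVl, hVr⟩ := hVbetween x hx.1
    rcases eq_or_lt_of_le hin with heq | hlt
    · -- floor = n, so x = 1
      have h1 : ((n:ℕ):ℝ) ≤ (n:ℝ)*x := by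
        have h1' := (hfloor_facts x hx.1).1
        rw [heq] at h1'
        exact h1'
      have hx1 : x = 1 := by
        have h2 : (n:ℝ)*x = (n:ℝ)*1 := by
          rw [mul_one]; exact le_antisymm hxn (by exact_mod_cast h1)
        exact mul_left_cancel₀ hnne h2
      rw [hx1, hf1, hV1]
      norm_num
      positivity
    · set i := ⌊(n:ℝ)*x⌋₊ with hi
      have hmini : (min i n : ℕ) = i := min_eq_left (le_of_lt hlt)
      have hmini1 : (min (i+1) n : ℕ) = i + 1 := min_eq_left hlt
      have hgi_le := hg_le i
      have hgi_gt := hg_gt i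
      have hgi1_le := hg_le (i+1)
      rw [hmini] at hgi_le hgi_gt
      rw [hmini1] at hgi1_le
      have hxi : (i:ℝ)/n ≤ x := by
        rw [div_le_iff₀ hn0]
        calc (i:ℝ) ≤ (n:ℝ)*x := (hfloor_facts x hx.1).1
        _ = x * n := by ring
      have hxi1 : x ≤ ((i:ℝ)+1)/n := by
        rw [le_div_iff₀ hn0]
        have := (hfloor_facts x hx.1).2
        nlinarith
      have hmem_i := hgridmem i (le_of_lt hlt)
      have hmem_i1 := hgridmem (i+1) hlt
      push_cast at hmem_i1
      have hfxl : f ((i:ℝ)/n) ≤ f x := hmono hmem_i hx hxi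
      have hfxr : f x ≤ f (((i:ℝ)+1)/n) := hmono hx hmem_i1 hxi1
      have hmodi : |f ((i:ℝ)/n) - f (((i:ℝ)+1)/n)| ≤ ε := by
        apply hmod _ hmem_i _ hmem_i1
        rw [show (i:ℝ)/n - ((i:ℝ)+1)/n = -(1/n) by field_simp; ring, abs_neg,
          abs_of_pos (by positivity)]
      rw [abs_le] at hmodi
      have hcast : ((i+1 : ℕ) : ℝ)/n = ((i:ℝ)+1)/n := by push_cast; ring
      rw [hcast] at hgi1_le
      have h2n : 1/(n:ℝ) ≤ 2/n := by
        rw [div_le_div_iff₀ hn0 hn0]; nlinarith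
      rw [abs_le]
      constructor
      · -- -(ε + 2/n) ≤ f x - V x, i.e. V x - f x ≤ ε + 2/n
        have : V x - f x ≤ g (i+1) - f ((i:ℝ)/n) := by linarith
        have h4 : g (i+1) - f ((i:ℝ)/n) ≤ ε := by linarith
        linarith
      · have : f x - V x ≤ f (((i:ℝ)+1)/n) - g i := by linarith
        have h4 : f (((i:ℝ)+1)/n) - g i ≤ ε + 1/n := by linarith
        linarith
end

section
/- Let f : [0,1] → [0,1] be continuous and strictly increasing with f(0) = 0 and f(1) = 1. Then for every ε > 0 there exist an integer n ≥ 1 and a function V ∈ W_n such that |V(x) − f(x)| ≤ ε for all x ∈ [0,1]. -/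
/-- Grid values: `gA f n i = ⌊n f(i/n)⌋ / n`. -/
noncomputable def gA (f : ℝ → ℝ) (n : ℕ) (i : ℕ) : ℝ :=
  (⌊(n:ℝ) * f ((i:ℝ)/n)⌋₊ : ℝ) / n

/-- Index of the grid interval containing `x` (clamped to `n-1`). -/
noncomputable def idxA (n : ℕ) (x : ℝ) : ℕ := min ⌊(n:ℝ)*x⌋₊ (n-1)

/-- Piecewise-linear interpolation of the grid values. -/
noncomputable def VA (f : ℝ → ℝ) (n : ℕ) (x : ℝ) : ℝ :=
  gA f n (idxA n x) +
    ((n:ℝ) * x - (idxA n x : ℕ)) * (gA f n (idxA n x + 1) - gA f n (idxA n x))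

lemma idxA_lt (n : ℕ) (hn : 1 ≤ n) (x : ℝ) : idxA n x < n := by
  have : idxA n x ≤ n - 1 := min_le_right _ _
  omega

lemma idxA_le_mul (n : ℕ) (x : ℝ) (hx : 0 ≤ x) : (idxA n x : ℝ) ≤ (n:ℝ) * x := by
  have h1 : (idxA n x : ℝ) ≤ (⌊(n:ℝ)*x⌋₊ : ℝ) := by
    exact_mod_cast min_le_left ⌊(n:ℝ)*x⌋₊ (n-1)
  exact h1.trans (Nat.floor_le (by positivity))

lemma mul_le_idxA (n : ℕ) (hn : 1 ≤ n) (x : ℝ) (hx : x ≤ 1) :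
    (n:ℝ) * x ≤ (idxA n x : ℝ) + 1 := by
  rcases le_or_gt ⌊(n:ℝ)*x⌋₊ (n-1) with h | h
  · have hmin : idxA n x = ⌊(n:ℝ)*x⌋₊ := min_eq_left h
    rw [hmin]
    exact (Nat.lt_floor_add_one _).le
  · have hmin : idxA n x = n - 1 := min_eq_right (by omega)
    rw [hmin]
    have hc : ((n-1:ℕ):ℝ) = (n:ℝ) - 1 := by
      rw [Nat.cast_sub hn]; norm_num
    rw [hc]
    have : (n:ℝ) * x ≤ (n:ℝ) * 1 :=
      mul_le_mul_of_nonneg_left hx (Nat.cast_nonneg n)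
    linarith
  
lemma idxA_mono (n : ℕ) {x y : ℝ} (hxy : x ≤ y) : idxA n x ≤ idxA n y :=
  min_le_min (Nat.floor_mono (mul_le_mul_of_nonneg_left hxy (Nat.cast_nonneg n))) le_rfl

lemma VA_eq (f : ℝ → ℝ) (n : ℕ) (x : ℝ) :
    VA f n x = gA f n (idxA n x) +
      ((n:ℝ) * x - (idxA n x : ℕ)) * (gA f n (idxA n x + 1) - gA f n (idxA n x)) := rfl

lemma idxA_eq (n : ℕ) (hn : 1 ≤ n) (i : ℕ) (hi : i < n) (x : ℝ)
    (h1 : (i:ℝ)/n ≤ x) (h2 : x < ((i:ℝ)+1)/n) : idxA n x = i := by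
  have hn0 : (0:ℝ) < n := by exact_mod_cast hn
  have hl : (i:ℝ) ≤ (n:ℝ) * x := by
    rw [div_le_iff₀ hn0] at h1; linarith
  have hr : (n:ℝ) * x < (i:ℝ) + 1 := by
    rw [lt_div_iff₀ hn0] at h2; linarith
  have hfl : ⌊(n:ℝ)*x⌋₊ = i := by
    rw [Nat.floor_eq_iff (le_trans (Nat.cast_nonneg i) hl)]
    exact ⟨hl, hr⟩
  unfold idxA
  rw [hfl]
  exact min_eq_left (by omega)

lemma VA_grid (f : ℝ → ℝ) (n : ℕ) (hn : 1 ≤ n) (i : ℕ) (hi : i ≤ n) :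
    VA f n ((i:ℝ)/n) = gA f n i := by
  have hn0 : (0:ℝ) < n := by exact_mod_cast hn
  have hx : (n:ℝ) * ((i:ℝ)/n) = i := by field_simp
  have hfl : ⌊(n:ℝ) * ((i:ℝ)/n)⌋₊ = i := by rw [hx]; exact Nat.floor_natCast i
  rcases lt_or_eq_of_le hi with h | h
  · have hmin : idxA n ((i:ℝ)/n) = i := by
      unfold idxA; rw [hfl]; exact min_eq_left (by omega)
    simp only [VA]
    rw [hmin, hx]
    ring
  · have hmin : idxA n ((i:ℝ)/n) = n - 1 := by
      unfold idxA; rw [hfl]; exact min_eq_right (by omega)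
    have hc : ((n-1:ℕ):ℝ) = (n:ℝ) - 1 := by
      rw [Nat.cast_sub hn]; norm_num
    have h1 : ((n - 1 + 1 : ℕ)) = n := by omega
    simp only [VA]
    rw [hmin, hx, h1, hc, h]
    ring

/-- Every continuous strictly increasing `f : [0,1] → [0,1]` with
`f(0)=0`, `f(1)=1` is uniformly approximated within any `ε > 0` by an element of some
`W_n`. -/
theorem wn_approximates_arbitrary_function
    (f : ℝ → ℝ)
    (hcont : ContinuousOn f (Set.Icc (0:ℝ) 1))
    (hmono : StrictMonoOn f (Set.Icc (0:ℝ) 1))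
    (hrange : ∀ x ∈ Set.Icc (0:ℝ) 1, f x ∈ Set.Icc (0:ℝ) 1)
    (hf0 : f 0 = 0) (hf1 : f 1 = 1)
    (ε : ℝ) (hε : 0 < ε) :
    ∃ n : ℕ, 1 ≤ n ∧ ∃ V ∈ Wn n, ∀ x ∈ Set.Icc (0:ℝ) 1, |V x - f x| ≤ ε := by
  -- uniform continuity
  have hucont := (isCompact_Icc (a := (0:ℝ)) (b := 1)).uniformContinuousOn_of_continuous hcont
  rw [Metric.uniformContinuousOn_iff] at hucont
  obtain ⟨δ, hδ, hδ'⟩ := hucont (ε/2) (by linarith)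
  -- choose n
  obtain ⟨n, hngt⟩ := exists_nat_gt (max (1/δ) (2/ε))
  have hδpos : 0 < 1/δ := by positivity
  have hn0 : (0:ℝ) < n := lt_trans hδpos (lt_of_le_of_lt (le_max_left _ _) hngt)
  have hn : 1 ≤ n := Nat.cast_pos.mp hn0
  have hmesh1 : 1/(n:ℝ) < δ := by
    have h1 : 1/δ < n := lt_of_le_of_lt (le_max_left _ _) hngt
    rw [div_lt_iff₀ hn0]
    rw [div_lt_iff₀ hδ] at h1
    nlinarith
  have hmesh2 : 1/(n:ℝ) ≤ ε/2 := by
    have h1 : 2/ε < n := lt_of_le_of_lt (le_max_right _ _) hngt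
    rw [div_le_div_iff₀ hn0 (by norm_num : (0:ℝ) < 2)]
    rw [div_lt_iff₀ hε] at h1
    nlinarith
  have hfmono : MonotoneOn f (Set.Icc (0:ℝ) 1) := hmono.monotoneOn
  -- grid points are in [0,1]
  have hgridmem : ∀ i : ℕ, i ≤ n → (i:ℝ)/n ∈ Set.Icc (0:ℝ) 1 := by
    intro i hi
    constructor
    · positivity
    · rw [div_le_one hn0]; exact_mod_cast hi
  -- basic facts about g
  have hgmono : ∀ i j : ℕ, i ≤ j → j ≤ n → gA f n i ≤ gA f n j := by
    intro i j hij hj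
    have hfle : f ((i:ℝ)/n) ≤ f ((j:ℝ)/n) := by
      apply hfmono (hgridmem i (hij.trans hj)) (hgridmem j hj)
      exact (div_le_div_iff_of_pos_right hn0).mpr (by exact_mod_cast hij)
    unfold gA
    exact (div_le_div_iff_of_pos_right hn0).mpr (by
      exact_mod_cast Nat.floor_mono (mul_le_mul_of_nonneg_left hfle (le_of_lt hn0)))
  have hg_le : ∀ i : ℕ, i ≤ n → gA f n i ≤ f ((i:ℝ)/n) := by
    intro i hi
    have h0 : 0 ≤ f ((i:ℝ)/n) := (hrange _ (hgridmem i hi)).1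
    unfold gA
    rw [div_le_iff₀ hn0]
    have := Nat.floor_le (by positivity : (0:ℝ) ≤ (n:ℝ) * f ((i:ℝ)/n))
    linarith
  have hle_g : ∀ i : ℕ, i ≤ n → f ((i:ℝ)/n) ≤ gA f n i + 1/n := by
    intro i hi
    unfold gA
    have h : (n:ℝ) * f ((i:ℝ)/n) ≤ (⌊(n:ℝ) * f ((i:ℝ)/n)⌋₊ : ℝ) + 1 :=
      (Nat.lt_floor_add_one _).le
    calc f ((i:ℝ)/n) = ((n:ℝ) * f ((i:ℝ)/n)) / n := by field_simp
    _ ≤ ((⌊(n:ℝ) * f ((i:ℝ)/n)⌋₊ : ℝ) + 1) / n := (div_le_div_iff_of_pos_right hn0).mpr h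
    _ = (⌊(n:ℝ) * f ((i:ℝ)/n)⌋₊ : ℝ) / n + 1/n := by ring
  have hg0 : gA f n 0 = 0 := by
    unfold gA
    norm_num [hf0]
  have hgn : gA f n n = 1 := by
    unfold gA
    rw [div_self (ne_of_gt hn0), hf1, mul_one, Nat.floor_natCast, div_self (ne_of_gt hn0)]
  -- oscillation bound
  have hosc : ∀ i : ℕ, i < n → f (((i:ℝ)+1)/n) - f ((i:ℝ)/n) ≤ ε/2 := by
    intro i hi
    have h1 : ((i:ℝ)+1)/n = ((i+1:ℕ):ℝ)/n := by push_cast; ring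
    have hm1 := hgridmem (i+1) (by omega)
    have hm0 := hgridmem i (le_of_lt hi)
    rw [h1]
    have hd : dist (((i+1:ℕ):ℝ)/n) ((i:ℝ)/n) < δ := by
      rw [Real.dist_eq]
      have : ((i+1:ℕ):ℝ)/n - (i:ℝ)/n = 1/n := by push_cast; ring
      rw [this, abs_of_pos (by positivity)]
      exact hmesh1
    have := hδ' _ hm1 _ hm0 hd
    rw [Real.dist_eq] at this
    have := le_abs_self (f (((i+1:ℕ):ℝ)/n) - f ((i:ℝ)/n))
    linarith [le_abs_self (f (((i+1:ℕ):ℝ)/n) - f ((i:ℝ)/n)),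
      (hδ' _ hm1 _ hm0 hd)]
  -- bounds for V on each interval
  have hVbound : ∀ x ∈ Set.Icc (0:ℝ) 1,
      gA f n (idxA n x) ≤ VA f n x ∧ VA f n x ≤ gA f n (idxA n x + 1) := by
    intro x hx
    have hiL := idxA_le_mul n x hx.1
    have hiR := mul_le_idxA n hn x hx.2
    have hslope : gA f n (idxA n x) ≤ gA f n (idxA n x + 1) :=
      hgmono _ _ (Nat.le_succ _) (idxA_lt n hn x)
    rw [VA_eq]
    constructor
    · nlinarith
    · nlinarith
  -- x is in the idxA interval
  have hxmem : ∀ x ∈ Set.Icc (0:ℝ) 1,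
      ((idxA n x : ℝ)/n ≤ x ∧ x ≤ ((idxA n x : ℝ)+1)/n) := by
    intro x hx
    have hiL := idxA_le_mul n x hx.1
    have hiR := mul_le_idxA n hn x hx.2
    constructor
    · rw [div_le_iff₀ hn0]; linarith
    · rw [le_div_iff₀ hn0]; linarith
  refine ⟨n, hn, VA f n, ⟨?_, ?_, ?_, ?_, ?_, ?_⟩, ?_⟩
  · -- range
    intro x hx
    obtain ⟨hL, hR⟩ := hVbound x hx
    have h0 : gA f n 0 ≤ gA f n (idxA n x) := hgmono 0 _ (Nat.zero_le _) (le_of_lt (idxA_lt n hn x))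
    have h1 : gA f n (idxA n x + 1) ≤ gA f n n := hgmono _ n (idxA_lt n hn x) le_rfl
    rw [hg0] at h0
    rw [hgn] at h1
    exact ⟨by linarith, by linarith⟩
  · -- monotone
    intro x hx y hy hxy
    have hixy : idxA n x ≤ idxA n y := idxA_mono n hxy
    rcases lt_or_eq_of_le hixy with h | h
    · obtain ⟨_, hRx⟩ := hVbound x hx
      obtain ⟨hLy, _⟩ := hVbound y hy
      have : gA f n (idxA n x + 1) ≤ gA f n (idxA n y) :=
        hgmono _ _ (by omega) (le_of_lt (idxA_lt n hn y))
      linarith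
    · rw [VA_eq, VA_eq, h]
      have hslope : gA f n (idxA n y) ≤ gA f n (idxA n y + 1) :=
        hgmono _ _ (Nat.le_succ _) (idxA_lt n hn y)
      have : (n:ℝ) * x ≤ (n:ℝ) * y := mul_le_mul_of_nonneg_left hxy (le_of_lt hn0)
      nlinarith
  · -- V 0 = 0
    have := VA_grid f n hn 0 (Nat.zero_le n)
    simpa [hg0] using this
  · -- V 1 = 1
    have := VA_grid f n hn n le_rfl
    rw [div_self (ne_of_gt hn0)] at this
    rw [this, hgn]
  · -- grid values
    intro i hi
    exact ⟨⌊(n:ℝ) * f ((i:ℝ)/n)⌋₊, VA_grid f n hn i hi⟩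
  · -- affine
    intro i hi x hx1 hx2
    have hcast : ((i+1:ℕ):ℝ) = (i:ℝ)+1 := by push_cast; ring
    have hgi : VA f n ((i:ℝ)/n) = gA f n i := VA_grid f n hn i (le_of_lt hi)
    have hgi1 : VA f n (((i:ℝ)+1)/n) = gA f n (i+1) := by
      rw [← hcast]; exact VA_grid f n hn (i+1) (by omega)
    rw [hgi, hgi1]
    rcases lt_or_eq_of_le hx2 with h | h
    · have hidx : idxA n x = i := idxA_eq n hn i hi x hx1 h
      rw [VA_eq, hidx]
      have : (n:ℝ) * (x - (i:ℝ)/n) = (n:ℝ)*x - i := by field_simp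
      rw [this]
    · rw [h, ← hcast, VA_grid f n hn (i+1) (by omega), hcast]
      field_simp
      ring
  · -- approximation
    intro x hx
    set i := idxA n x with hidef
    have hiltn : i < n := idxA_lt n hn x
    obtain ⟨hVL, hVR⟩ := hVbound x hx
    obtain ⟨hxL, hxR⟩ := hxmem x hx
    have hcast : ((i+1:ℕ):ℝ) = (i:ℝ)+1 := by push_cast; ring
    have hmem1 : ((i:ℝ)+1)/n ∈ Set.Icc (0:ℝ) 1 := by
      rw [← hcast]; exact hgridmem (i+1) (by omega)
    have hfxL : f ((i:ℝ)/n) ≤ f x := hfmono (hgridmem i (le_of_lt hiltn)) hx hxL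
    have hfxR : f x ≤ f (((i:ℝ)+1)/n) := hfmono hx hmem1 hxR
    have hgle : gA f n (i+1) ≤ f (((i:ℝ)+1)/n) := by
      have := hg_le (i+1) (by omega)
      rwa [hcast] at this
    have hgeL : f ((i:ℝ)/n) ≤ gA f n i + 1/n := hle_g i (le_of_lt hiltn)
    have hoscx := hosc i hiltn
    rw [abs_le]
    constructor
    · -- -ε ≤ V x - f x
      linarith
    · -- V x - f x ≤ ε
      linarith
end

section
/- Let Δ > 0 and let v_B : [0,1] → ℝ be an integrable value density with 0 ≤ v_B(x) ≤ Δ for all x and ∫_0^1 v_B = 1; set f(x) = ∫_0^x v_B(y) dy. Then for every integer n ≥ 1 there exists V ∈ W_n such that |V(x) − f(x)| ≤ (Δ + 2)/n for all x ∈ [0,1]. -/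
open MeasureTheory

/-- If Bob's value density is bounded above by `Δ`, then for every `n ≥ 1`
its cumulative valuation is approximated within `(Δ+2)/n` by some element of `W_n`. -/
theorem wn_approximates_bounded_density
    (Δ : ℝ) (hΔ : 0 < Δ) (vB : ℝ → ℝ)
    (hint : IntervalIntegrable vB volume 0 1)
    (hbd : ∀ x ∈ Set.Icc (0:ℝ) 1, 0 ≤ vB x ∧ vB x ≤ Δ)
    (hnorm : (∫ y in (0:ℝ)..1, vB y) = 1)
    (n : ℕ) (hn : 1 ≤ n) :
    ∃ V ∈ Wn n, ∀ x ∈ Set.Icc (0:ℝ) 1,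
      |V x - ∫ y in (0:ℝ)..x, vB y| ≤ (Δ + 2) / n := by
  classical
  set F : ℝ → ℝ := fun x => ∫ y in (0:ℝ)..x, vB y with hFdef
  have hnR : (0:ℝ) < (n:ℝ) := by exact_mod_cast (by omega : 0 < n)
  have hII : ∀ a b : ℝ, 0 ≤ a → a ≤ b → b ≤ 1 → IntervalIntegrable vB volume a b := by
    intro a b ha hab hb
    refine hint.mono_set ?_
    rw [Set.uIcc_of_le hab, Set.uIcc_of_le zero_le_one]
    exact Set.Icc_subset_Icc ha hb
  have hFdiff : ∀ a b : ℝ, 0 ≤ a → a ≤ b → b ≤ 1 →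
      F b - F a = ∫ y in a..b, vB y := by
    intro a b ha hab hb
    have h := intervalIntegral.integral_add_adjacent_intervals
      (hII 0 a le_rfl ha (hab.trans hb)) (hII a b ha hab hb)
    simp only [hFdef]
    linarith [h]
  have hFmono : ∀ a b : ℝ, 0 ≤ a → a ≤ b → b ≤ 1 → F a ≤ F b := by
    intro a b ha hab hb
    have h := hFdiff a b ha hab hb
    have h2 : 0 ≤ ∫ y in a..b, vB y :=
      intervalIntegral.integral_nonneg hab (fun x hx => (hbd x ⟨ha.trans hx.1, hx.2.trans hb⟩).1)
    linarith
  have hFlip : ∀ a b : ℝ, 0 ≤ a → a ≤ b → b ≤ 1 → F b - F a ≤ Δ * (b - a) := by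
    intro a b ha hab hb
    rw [hFdiff a b ha hab hb]
    have h2 : (∫ y in a..b, vB y) ≤ ∫ _y in a..b, Δ := by
      apply intervalIntegral.integral_mono_on hab (hII a b ha hab hb) intervalIntegrable_const
      intro x hx; exact (hbd x ⟨ha.trans hx.1, hx.2.trans hb⟩).2
    calc (∫ y in a..b, vB y) ≤ ∫ _y in a..b, Δ := h2
      _ = Δ * (b - a) := by rw [intervalIntegral.integral_const, smul_eq_mul]; ring
  have hF0 : F 0 = 0 := by simp [hFdef]
  have hF1 : F 1 = 1 := hnorm
  have hFnn : ∀ x : ℝ, 0 ≤ x → x ≤ 1 → 0 ≤ F x := fun x hx hx1 =>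
    hF0 ▸ hFmono 0 x le_rfl hx hx1
  set g : ℤ → ℝ := fun i => (⌊(n:ℝ) * F ((i:ℝ) / n)⌋ : ℝ) / n with hg
  have hgle : ∀ i : ℤ, g i ≤ F ((i:ℝ)/n) := by
    intro i
    rw [hg, div_le_iff₀ hnR]
    calc ((⌊(n:ℝ) * F ((i:ℝ)/n)⌋ : ℝ)) ≤ (n:ℝ) * F ((i:ℝ)/n) := Int.floor_le _
      _ = F ((i:ℝ)/n) * n := by ring
  have hglt : ∀ i : ℤ, F ((i:ℝ)/n) - 1/n ≤ g i := by
    intro i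
    have h := Int.lt_floor_add_one ((n:ℝ) * F ((i:ℝ)/n))
    have h1 : (1/(n:ℝ)) * n = 1 := by field_simp
    simp only [hg]
    rw [le_div_iff₀ hnR]
    nlinarith [h, h1]
  have hgmono : ∀ i j : ℤ, 0 ≤ i → i ≤ j → j ≤ (n:ℤ) → g i ≤ g j := by
    intro i j hi hij hj
    have h1 : (0:ℝ) ≤ (i:ℝ)/n := by positivity
    have hijR : (i:ℝ) ≤ (j:ℝ) := by exact_mod_cast hij
    have h2 : (i:ℝ)/n ≤ (j:ℝ)/n := by gcongr
    have h3 : (j:ℝ)/n ≤ 1 := by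
      rw [div_le_one hnR]; exact_mod_cast hj
    have hF := hFmono _ _ h1 h2 h3
    have hfl : ⌊(n:ℝ) * F ((i:ℝ)/n)⌋ ≤ ⌊(n:ℝ) * F ((j:ℝ)/n)⌋ :=
      Int.floor_le_floor (by nlinarith)
    simp only [hg]
    gcongr
  have hg0 : g 0 = 0 := by
    simp [hg, hF0]
  have hgn : g (n:ℤ) = 1 := by
    simp only [hg, Int.cast_natCast, div_self hnR.ne', hF1, mul_one, Int.floor_natCast]
  set idx : ℝ → ℤ := fun x => min ⌊(n:ℝ)*x⌋ ((n:ℤ)-1) with hidx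
  set V : ℝ → ℝ := fun x =>
    g (idx x) + ((n:ℝ)*x - (idx x : ℝ)) * (g (idx x + 1) - g (idx x)) with hV
  -- Lemma A: explicit affine formula on each grid interval
  have hA : ∀ i : ℤ, 0 ≤ i → i < (n:ℤ) → ∀ x : ℝ, (i:ℝ)/n ≤ x → x ≤ ((i:ℝ)+1)/n →
      V x = g i + ((n:ℝ)*x - (i:ℝ)) * (g (i+1) - g i) := by
    intro i hi0 hin x hx1 hx2
    have h1 : (i:ℝ) ≤ (n:ℝ)*x := by
      rw [div_le_iff₀ hnR] at hx1; linarith [hx1]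
    rcases hx2.lt_or_eq with h | h
    · have h2 : (n:ℝ)*x < (i:ℝ)+1 := by
        rw [lt_div_iff₀ hnR] at h; linarith [h]
      have hfl : ⌊(n:ℝ)*x⌋ = i :=
        Int.floor_eq_iff.mpr ⟨h1, by push_cast; linarith⟩
      have hidxx : idx x = i := by
        simp only [hidx, hfl]; omega
      simp only [hV, hidxx]
    · have hnx : (n:ℝ)*x = (i:ℝ)+1 := by
        rw [h]; field_simp
      have hfl : ⌊(n:ℝ)*x⌋ = i+1 := by
        rw [show (n:ℝ)*x = ((i+1:ℤ):ℝ) by push_cast; linarith [hnx], Int.floor_intCast]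
      by_cases hc : i+1 ≤ (n:ℤ)-1
      · have hidxx : idx x = i+1 := by
          simp only [hidx, hfl]; omega
        simp only [hV, hidxx]
        push_cast
        rw [hnx]
        ring
      · have hidxx : idx x = i := by
          simp only [hidx, hfl]; omega
        simp only [hV, hidxx]
  -- index spec
  have hidx_spec : ∀ x : ℝ, 0 ≤ x → x ≤ 1 →
      0 ≤ idx x ∧ idx x < (n:ℤ) ∧ ((idx x : ℝ))/n ≤ x ∧ x ≤ ((idx x:ℝ)+1)/n := by
    intro x hx0 hx1
    have hf0 : 0 ≤ ⌊(n:ℝ)*x⌋ := Int.floor_nonneg.mpr (by positivity)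
    have hA1 : 0 ≤ idx x := by simp only [hidx]; omega
    have hA2 : idx x < (n:ℤ) := by simp only [hidx]; omega
    have hA3 : ((idx x : ℝ))/n ≤ x := by
      rw [div_le_iff₀ hnR]
      have h1 : ((idx x : ℝ)) ≤ (⌊(n:ℝ)*x⌋ : ℝ) := by
        exact_mod_cast (by simp only [hidx]; omega : idx x ≤ ⌊(n:ℝ)*x⌋)
      have h2 := Int.floor_le ((n:ℝ)*x)
      linarith
    have hA4 : x ≤ ((idx x:ℝ)+1)/n := by
      rw [le_div_iff₀ hnR]
      rcases le_or_gt ⌊(n:ℝ)*x⌋ ((n:ℤ)-1) with hc | hc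
      · have he : idx x = ⌊(n:ℝ)*x⌋ := by simp only [hidx]; omega
        have := Int.lt_floor_add_one ((n:ℝ)*x)
        rw [he]; push_cast; linarith
      · have he : idx x = (n:ℤ)-1 := by simp only [hidx]; omega
        rw [he]; push_cast
        nlinarith [hx1, hnR]
    exact ⟨hA1, hA2, hA3, hA4⟩
  -- V at grid points
  have hVg : ∀ j : ℤ, 0 ≤ j → j ≤ (n:ℤ) → V ((j:ℝ)/n) = g j := by
    intro j h0 hjn
    rcases hjn.lt_or_eq with hlt | heq
    · rw [hA j h0 hlt ((j:ℝ)/n) le_rfl (by gcongr <;> linarith)]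
      rw [mul_div_cancel₀ _ hnR.ne']
      ring
    · subst heq
      have h1 : (((n:ℤ)-1 : ℤ):ℝ)/n ≤ ((n:ℤ):ℝ)/n := by gcongr; push_cast; linarith
      have h2 : ((n:ℤ):ℝ)/n ≤ ((((n:ℤ)-1:ℤ):ℝ)+1)/n := by
        gcongr; push_cast; linarith
      rw [hA ((n:ℤ)-1) (by omega) (by omega) _ h1 h2]
      rw [mul_div_cancel₀ _ hnR.ne']
      push_cast
      ring_nf
  -- sandwich
  have hsand : ∀ i : ℤ, 0 ≤ i → i < (n:ℤ) → ∀ x : ℝ, (i:ℝ)/n ≤ x → x ≤ ((i:ℝ)+1)/n →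
      g i ≤ V x ∧ V x ≤ g (i+1) := by
    intro i hi0 hin x hx1 hx2
    rw [hA i hi0 hin x hx1 hx2]
    have ht0 : 0 ≤ (n:ℝ)*x - (i:ℝ) := by rw [div_le_iff₀ hnR] at hx1; linarith
    have ht1 : (n:ℝ)*x - (i:ℝ) ≤ 1 := by rw [le_div_iff₀ hnR] at hx2; linarith
    have hd : 0 ≤ g (i+1) - g i := by
      have := hgmono i (i+1) hi0 (by omega) (by omega)
      linarith
    constructor
    · nlinarith
    · nlinarith
  refine ⟨V, ⟨?_, ?_, ?_, ?_, ?_, ?_⟩, ?_⟩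
  · -- range
    intro x hx
    obtain ⟨hi0, hin, hx1, hx2⟩ := hidx_spec x hx.1 hx.2
    obtain ⟨hl, hr⟩ := hsand (idx x) hi0 hin x hx1 hx2
    constructor
    · have := hgmono 0 (idx x) le_rfl hi0 hin.le
      rw [hg0] at this; linarith
    · have := hgmono (idx x + 1) (n:ℤ) (by omega) (by omega) le_rfl
      rw [hgn] at this; linarith
  · -- monotone
    intro x hx y hy hxy
    obtain ⟨hi0, hin, hx1, hx2⟩ := hidx_spec x hx.1 hx.2
    obtain ⟨hj0, hjn, hy1, hy2⟩ := hidx_spec y hy.1 hy.2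
    have hij : idx x ≤ idx y := by
      have : ⌊(n:ℝ)*x⌋ ≤ ⌊(n:ℝ)*y⌋ := Int.floor_le_floor (by nlinarith)
      simp only [hidx]; omega
    rcases eq_or_lt_of_le hij with he | hlt
    · rw [hA (idx x) hi0 hin x hx1 hx2, hA (idx x) hi0 hin y (he ▸ hy1) (he ▸ hy2)]
      have hd : 0 ≤ g (idx x + 1) - g (idx x) := by
        have := hgmono (idx x) (idx x + 1) hi0 (by omega) (by omega)
        linarith
      have hmul := mul_le_mul_of_nonneg_right
        (show (n:ℝ)*x - (idx x : ℝ) ≤ (n:ℝ)*y - (idx x : ℝ) by nlinarith) hd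
      linarith
    · have h1 := (hsand (idx x) hi0 hin x hx1 hx2).2
      have h2 := (hsand (idx y) hj0 hjn y hy1 hy2).1
      have h3 : g (idx x + 1) ≤ g (idx y) := hgmono _ _ (by omega) (by omega) (by omega)
      linarith
  · -- V 0 = 0
    have := hVg 0 le_rfl (by omega)
    simpa [hg0] using this
  · -- V 1 = 1
    have h := hVg (n:ℤ) (by omega) le_rfl
    rw [hgn, show ((n:ℤ):ℝ) = (n:ℝ) from by push_cast; rfl, div_self hnR.ne'] at h
    exact h
  · -- grid values
    intro i hi
    have h1 : V ((i:ℝ)/n) = g (i:ℤ) := by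
      have h := hVg (i:ℤ) (by omega) (by omega)
      rw [show (((i:ℤ)):ℝ) = (i:ℝ) from by push_cast; rfl] at h
      exact h
    have hnn : 0 ≤ ⌊(n:ℝ) * F ((((i:ℤ)):ℝ)/n)⌋ := by
      apply Int.floor_nonneg.mpr
      have hF : (0:ℝ) ≤ F ((((i:ℤ)):ℝ)/n) := by
        apply hFnn
        · positivity
        · rw [div_le_one hnR]; exact_mod_cast hi
      positivity
    refine ⟨(⌊(n:ℝ) * F ((((i:ℤ)):ℝ) / n)⌋).toNat, ?_⟩
    rw [h1]
    simp only [hg]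
    congr 1
    exact_mod_cast (Int.toNat_of_nonneg hnn).symm
  · -- affine
    intro i hi x hx1 hx2
    have hc : (((i:ℤ)):ℝ) = (i:ℝ) := by push_cast; rfl
    have h1 : V ((i:ℝ)/n) = g (i:ℤ) := by rw [← hc]; exact hVg i (by omega) (by omega)
    have h2 : V (((i:ℝ)+1)/n) = g ((i:ℤ)+1) := by
      have := hVg ((i:ℤ)+1) (by omega) (by omega)
      rw [show ((((i:ℤ)+1 : ℤ)):ℝ) = (i:ℝ)+1 by push_cast; ring] at this
      exact this
    have he : (n:ℝ)*(x - (i:ℝ)/n) = (n:ℝ)*x - (i:ℝ) := by field_simp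
    rw [hA (i:ℤ) (by omega) (by omega) x (hc ▸ hx1) (hc ▸ hx2), h1, h2, hc, he]
  · -- approximation bound
    intro x hx
    rw [show (∫ y in (0:ℝ)..x, vB y) = F x from rfl]
    obtain ⟨hi0, hin, hx1, hx2⟩ := hidx_spec x hx.1 hx.2
    set i := idx x with hi
    obtain ⟨hl, hr⟩ := hsand i hi0 hin x hx1 hx2
    have hin' : ((i:ℝ)+1)/n ≤ 1 := by
      rw [div_le_one hnR]
      have : (i:ℝ) + 1 ≤ (n:ℝ) := by exact_mod_cast (by omega : i + 1 ≤ (n:ℤ))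
      linarith
    have hi0' : (0:ℝ) ≤ (i:ℝ)/n := by
      apply div_nonneg _ hnR.le; exact_mod_cast hi0
    have hFl : F ((i:ℝ)/n) ≤ F x := hFmono _ _ hi0' hx1 (hx.2)
    have hFr : F x ≤ F (((i:ℝ)+1)/n) := hFmono _ _ (hi0'.trans hx1) hx2 hin'
    have hgap : F (((i:ℝ)+1)/n) - F ((i:ℝ)/n) ≤ Δ / n := by
      have := hFlip ((i:ℝ)/n) (((i:ℝ)+1)/n) hi0' (by gcongr <;> linarith) hin'
      have he : ((i:ℝ)+1)/n - (i:ℝ)/n = 1/n := by ring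
      rw [he] at this
      linarith [this, mul_one_div Δ (n:ℝ)]
    have hg1 : g (i+1) ≤ F (((i:ℝ)+1)/n) := by
      have := hgle (i+1)
      rw [show (((i+1 : ℤ)):ℝ) = (i:ℝ)+1 by push_cast; ring] at this
      exact this
    have hg2 : F ((i:ℝ)/n) - 1/n ≤ g i := hglt i
    clear_value i idx V g F
    have h5 : Δ/n + 1/n ≤ (Δ+2)/n := by
      rw [← add_div, div_le_div_iff_of_pos_right hnR]
      linarith
    have h6 : Δ/n ≤ (Δ+2)/n := by
      rw [div_le_div_iff_of_pos_right hnR]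
      linarith
    rw [abs_le]
    constructor
    · have h4 : F x - V x ≤ Δ/n + 1/n := by
        linarith only [hFr, hgap, hl, hg2]
      linarith only [h4, h5]
    · have h3 : V x - F x ≤ Δ/n := by
        linarith only [hr, hg1, hgap, hFl]
      linarith only [h3, h6]
end
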